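/- arXiv:2303.15766 — 4 statements merged into one kernel-verified Lean document; each statement's English description precedes it below -/
import Mathlib

section
/- Let d ≥ 1 and 0 < α < 2, set a = 2^{1 - 1/α}, and let Φ(z) = Σ_{i=1}^d (2 - 2 cos z_i). Then for all z ∈ [-π,π]^d with Euclidean norm |z| ≤ a, one has Φ(z)^{α/2} ≥ |z|^α (1 - (1/12)^{α/2} |z|^α). -/
open Real

/-- `sin y ≥ y - y^3/6` for `y ≥ 0`. -/
lemma sin_lb (y : ℝ) (hy : 0 ≤ y) : y - y ^ 3 / 6 ≤ Real.sin y := by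
  have hmono : Monotone (fun x : ℝ => Real.sin x - (x - x ^ 3 / 6)) := by
    apply monotone_of_deriv_nonneg
    · fun_prop
    · intro x
      have hderiv : HasDerivAt (fun x : ℝ => Real.sin x - (x - x ^ 3 / 6))
          (Real.cos x - (1 - 3 * x ^ 2 / 6)) x := by
        have h1 : HasDerivAt Real.sin (Real.cos x) x := Real.hasDerivAt_sin x
        have h2 : HasDerivAt (fun x : ℝ => x - x ^ 3 / 6) (1 - 3 * x ^ 2 / 6) x := by
          have := ((hasDerivAt_pow 3 x).div_const 6)
          exact ((hasDerivAt_id' x).sub this).congr_deriv (by norm_num)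
        exact h1.sub h2
      rw [hderiv.deriv]
      have := Real.one_sub_sq_div_two_le_cos (x := x)
      nlinarith
  have := hmono hy
  simpa using this

/-- `2 - 2 cos x ≥ x^2 - x^4/12` for `x^2 ≤ 24`. -/
lemma cos_quart_lb (x : ℝ) (hx : x ^ 2 ≤ 24) :
    x ^ 2 - x ^ 4 / 12 ≤ 2 - 2 * Real.cos x := by
  -- reduce to `|x|`, or rather handle via `sin (x/2)` using evenness
  wlog hx0 : 0 ≤ x generalizing x
  · have h := this (-x) (by nlinarith) (by linarith [le_of_not_ge hx0])
    rw [Real.cos_neg] at h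
    nlinarith [h]
  have hs : x / 2 - (x / 2) ^ 3 / 6 ≤ Real.sin (x / 2) := sin_lb _ (by linarith)
  have hs0 : 0 ≤ x / 2 - (x / 2) ^ 3 / 6 := by nlinarith
  have hcos : Real.cos x = 2 * Real.cos (x / 2) ^ 2 - 1 := by
    have := Real.cos_two_mul (x / 2)
    rw [show 2 * (x / 2) = x by ring] at this
    linarith
  have hpyth := Real.sin_sq_add_cos_sq (x / 2)
  have hssq : (x / 2 - (x / 2) ^ 3 / 6) ^ 2 ≤ Real.sin (x / 2) ^ 2 := by
    exact pow_le_pow_left₀ hs0 hs 2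
  nlinarith [hssq, sq_nonneg (x ^ 3)]

/-- real-valued subadditivity consequence: `t^p - s^p ≤ (t-s)^p`. -/
lemma rpow_sub_le (s t p : ℝ) (hs : 0 ≤ s) (hst : s ≤ t) (hp0 : 0 ≤ p) (hp1 : p ≤ 1) :
    t ^ p - s ^ p ≤ (t - s) ^ p := by
  have h := NNReal.rpow_add_le_add_rpow (t - s).toNNReal s.toNNReal hp0 hp1
  have hts : 0 ≤ t - s := by linarith
  have hadd : (t - s).toNNReal + s.toNNReal = t.toNNReal := by
    rw [← Real.toNNReal_add hts hs]; norm_num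
  rw [hadd] at h
  have := (NNReal.coe_le_coe).2 h
  push_cast [NNReal.coe_rpow] at this
  rw [Real.coe_toNNReal _ (by linarith : (0:ℝ) ≤ t), Real.coe_toNNReal _ hts,
    Real.coe_toNNReal _ hs] at this
  linarith

theorem symbol_lower_bound (d : ℕ) (hd : 1 ≤ d) (α : ℝ) (hα0 : 0 < α) (hα2 : α < 2)
    (z : EuclideanSpace ℝ (Fin d)) (hz : ∀ i, z i ∈ Set.Icc (-π) π)
    (hza : ‖z‖ ≤ 2 ^ (1 - 1 / α)) :
    (∑ i, (2 - 2 * Real.cos (z i))) ^ (α / 2) ≥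
      ‖z‖ ^ α * (1 - (1 / 12 : ℝ) ^ (α / 2) * ‖z‖ ^ α) := by
  set t := ‖z‖ with ht
  have ht0 : 0 ≤ t := norm_nonneg z
  -- `t ≤ 2`
  have ht2 : t ≤ 2 := by
    refine hza.trans ?_
    calc (2:ℝ) ^ (1 - 1 / α) ≤ (2:ℝ) ^ (1:ℝ) := by
          apply Real.rpow_le_rpow_of_exponent_le one_le_two
          have : 0 < 1 / α := by positivity
          linarith
      _ = 2 := by norm_num
  -- sum of squares equals `t^2`
  have hT : ∑ i, (z i) ^ 2 = t ^ 2 := by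
    rw [ht, EuclideanSpace.norm_eq, Real.sq_sqrt (by positivity)]
    simp [sq_abs]
  -- each coordinate squared is at most 24 (since |z i| ≤ π)
  have hzi : ∀ i, (z i) ^ 2 ≤ 24 := by
    intro i
    obtain ⟨h1, h2⟩ := hz i
    have hπ : π ≤ 4 := by linarith [Real.pi_le_four]
    nlinarith [Real.pi_pos]
  -- sum of fourth powers bounded by square of sum of squares
  have h4 : ∑ i, (z i) ^ 4 ≤ (∑ i, (z i) ^ 2) ^ 2 := by
    have := Finset.sum_sq_le_sq_sum_of_nonneg (s := Finset.univ)
      (f := fun i => (z i) ^ 2) (fun i _ => sq_nonneg _)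
    calc ∑ i, (z i) ^ 4 = ∑ i, ((z i) ^ 2) ^ 2 := by
          apply Finset.sum_congr rfl; intro i _; ring
      _ ≤ (∑ i, (z i) ^ 2) ^ 2 := this
  set S := ∑ i, (2 - 2 * Real.cos (z i)) with hS
  set p := α / 2 with hp
  have hp0 : 0 ≤ p := by positivity
  have hp1 : p ≤ 1 := by rw [hp]; linarith
  -- lower bound on S
  have hSA : t ^ 2 - t ^ 4 / 12 ≤ S := by
    have hterm : ∀ i ∈ Finset.univ, (z i) ^ 2 - (z i) ^ 4 / 12 ≤ 2 - 2 * Real.cos (z i) :=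
      fun i _ => cos_quart_lb (z i) (hzi i)
    have hsum := Finset.sum_le_sum hterm
    have h1 : ∑ i, ((z i) ^ 2 - (z i) ^ 4 / 12) = (∑ i, (z i) ^ 2) - (∑ i, (z i) ^ 4) / 12 := by
      rw [Finset.sum_sub_distrib, Finset.sum_div]
    rw [h1, hT] at hsum
    have h4' : ∑ i, (z i) ^ 4 ≤ t ^ 4 := by
      rw [hT] at h4; nlinarith [h4]
    linarith
  have ht4 : t ^ 2 ≤ 4 := by nlinarith
  have hA0 : 0 ≤ t ^ 2 - t ^ 4 / 12 := by
    nlinarith [mul_le_mul_of_nonneg_left ht4 (sq_nonneg t)]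
  have hS0 : 0 ≤ S := le_trans hA0 hSA
  rcases ht0.eq_or_lt with h0 | h0
  · -- t = 0 case
    rw [← h0]
    have : (0:ℝ) ^ α = 0 := Real.zero_rpow (ne_of_gt hα0)
    rw [this]
    simpa using Real.rpow_nonneg hS0 p
  -- t > 0
  have step1 : (t ^ 2 - t ^ 4 / 12) ^ p ≤ S ^ p := Real.rpow_le_rpow hA0 hSA hp0
  have hst : t ^ 4 / 12 ≤ t ^ 2 := by
    nlinarith [mul_le_mul_of_nonneg_left ht4 (sq_nonneg t)]
  have step2 : (t ^ 2 : ℝ) ^ p - (t ^ 4 / 12) ^ p ≤ (t ^ 2 - t ^ 4 / 12) ^ p :=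
    rpow_sub_le (t ^ 4 / 12) (t ^ 2) p (by positivity) hst hp0 hp1
  have e1 : (t ^ 2 : ℝ) ^ p = t ^ α := by
    rw [← Real.rpow_natCast t 2, ← Real.rpow_mul ht0]
    congr 1
    rw [hp]; push_cast; ring
  have e2 : ((t ^ 4 / 12 : ℝ)) ^ p = (1 / 12 : ℝ) ^ p * (t ^ α * t ^ α) := by
    have h4p : ((4 : ℕ) : ℝ) * p = α + α := by rw [hp]; push_cast; ring
    rw [show (t ^ 4 / 12 : ℝ) = (1 / 12 : ℝ) * t ^ 4 by ring,
      Real.mul_rpow (by norm_num) (by positivity), ← Real.rpow_natCast t 4,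
      ← Real.rpow_mul ht0, h4p, Real.rpow_add h0]
  have := le_trans step2 step1
  rw [e1, e2] at this
  have goal_eq : t ^ α * (1 - (1 / 12 : ℝ) ^ p * t ^ α)
      = t ^ α - (1 / 12 : ℝ) ^ p * (t ^ α * t ^ α) := by ring
  rw [ge_iff_le, goal_eq]
  linarith
end

section
/- Let d ≥ 1, 0 < α < 2, and set a = 2^{1-1/α}. Let F : [-π,π]^d → R be measurable with 0 ≤ F ≤ M and ∫_{[-π,π]^d} F(z) dz ≥ K, where K, M > 0 satisfy (K/(M V_d))^{1/d} ≤ a. Let Φ(z) = Σ_{i=1}^d (2 - 2 cos z_i). Then ∫_{[-π,π]^d} Φ(z)^{α/2} F(z) dz ≥ (d K/(d+α))·(K/(M V_d))^{α/d} − (1/12)^{α/2}·(d K/(d+2α))·(K/(M V_d))^{2α/d}. -/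
open Real MeasureTheory Metric

lemma aux_sin_lb {x : ℝ} (hx : 0 ≤ x) : x - x^3/6 ≤ Real.sin x := by
  have mono : MonotoneOn (fun y : ℝ => Real.sin y - y + y^3/6) (Set.Ici 0) := by
    apply monotoneOn_of_deriv_nonneg (convex_Ici 0)
    · fun_prop
    · fun_prop
    · intro y _
      have h1 : HasDerivAt (fun y : ℝ => Real.sin y - y + y^3/6)
          (Real.cos y - 1 + (3 * y^(3-1))/6) y :=
        ((Real.hasDerivAt_sin y).sub (hasDerivAt_id y)).add
          (((hasDerivAt_pow 3 y)).div_const 6)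
      rw [h1.deriv]
      nlinarith [Real.one_sub_sq_div_two_le_cos (x := y)]
  have h := mono (Set.mem_Ici.2 le_rfl) (Set.mem_Ici.2 hx) hx
  simp only [Real.sin_zero] at h
  nlinarith [h]

lemma aux_cos_ub (x : ℝ) : Real.cos x ≤ 1 - x^2/2 + x^4/24 := by
  wlog hx : 0 ≤ x with H
  · have := H (-x) (by linarith [le_of_not_ge hx])
    simpa [show ((-x):ℝ)^4 = x^4 from by ring] using this
  have mono : MonotoneOn (fun y : ℝ => 1 - y^2/2 + y^4/24 - Real.cos y) (Set.Ici 0) := by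
    apply monotoneOn_of_deriv_nonneg (convex_Ici 0)
    · fun_prop
    · fun_prop
    · intro y hy
      rw [interior_Ici] at hy
      have h1 : HasDerivAt (fun y : ℝ => 1 - y^2/2 + y^4/24 - Real.cos y)
          (0 - (2*y^(2-1))/2 + (4*y^(4-1))/24 - (-Real.sin y)) y :=
        (((hasDerivAt_const y (1:ℝ)).sub ((hasDerivAt_pow 2 y).div_const 2)).add
          ((hasDerivAt_pow 4 y).div_const 24)).sub (Real.hasDerivAt_cos y)
      rw [h1.deriv]
      have := aux_sin_lb (le_of_lt hy)
      nlinarith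
  have h := mono (Set.mem_Ici.2 le_rfl) (Set.mem_Ici.2 hx) hx
  simp only [Real.cos_zero] at h
  nlinarith [h]

lemma aux_coord_lb {t : ℝ} (ht : |t| ≤ π) : 4/π^2 * t^2 ≤ 2 - 2*Real.cos t := by
  have := Real.cos_le_one_sub_mul_cos_sq ht
  have h2 : 4/π^2*t^2 = 2*(2/π^2*t^2) := by ring
  linarith

lemma aux_coord_lb2 (t : ℝ) : t^2 - t^4/12 ≤ 2 - 2*Real.cos t := by
  nlinarith [aux_cos_ub t]

lemma norm_sq_eq (d : ℕ) (z : EuclideanSpace ℝ (Fin d)) : ‖z‖^2 = ∑ i, (z i)^2 := by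
  rw [EuclideanSpace.norm_eq, Real.sq_sqrt (by positivity)]
  congr 1; ext i; rw [Real.norm_eq_abs, sq_abs]

lemma sum_pow4_le (d : ℕ) (z : EuclideanSpace ℝ (Fin d)) :
    ∑ i, (z i)^4 ≤ (∑ i, (z i)^2)^2 := by
  have h := Finset.sum_sq_le_sq_sum_of_nonneg (s := Finset.univ)
    (f := fun i : Fin d => (z i)^2) (fun i _ => sq_nonneg _)
  calc ∑ i, (z i)^4 = ∑ i, ((z i)^2)^2 := by congr 1; ext i; ring
  _ ≤ (∑ i, (z i)^2)^2 := h

lemma real_rpow_add_le {x y p : ℝ} (hx : 0 ≤ x) (hy : 0 ≤ y) (hp : 0 ≤ p) (hp1 : p ≤ 1) :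
    (x+y)^p ≤ x^p + y^p := by
  have h := NNReal.rpow_add_le_add_rpow (x.toNNReal) (y.toNNReal) hp hp1
  rw [← Real.toNNReal_add hx hy] at h
  have h2 := NNReal.coe_le_coe.2 h
  push_cast [NNReal.coe_rpow, Real.coe_toNNReal x hx, Real.coe_toNNReal y hy,
    Real.coe_toNNReal (x+y) (add_nonneg hx hy)] at h2
  exact h2

lemma psi_mono {α c s t : ℝ} (hα : 0 < α) (hc : 0 ≤ c) (hs : 0 ≤ s) (hst : s ≤ t)
    (h1 : c * (s^α + t^α) ≤ 1) : s^α - c*s^(2*α) ≤ t^α - c*t^(2*α) := by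
  have ht : 0 ≤ t := hs.trans hst
  have hsa : s^α ≤ t^α := Real.rpow_le_rpow hs hst hα.le
  have e1 : s^(2*α) = s^α * s^α := by
    rw [two_mul, Real.rpow_add' hs (by positivity)]
  have e2 : t^(2*α) = t^α * t^α := by
    rw [two_mul, Real.rpow_add' ht (by positivity)]
  rw [e1, e2]
  nlinarith [Real.rpow_nonneg hs α, Real.rpow_nonneg ht α]

lemma a_pow {α : ℝ} (hα0 : 0 < α) : ((2:ℝ)^(1-1/α))^α = 2^(α-1) := by
  rw [← Real.rpow_mul (by norm_num)]
  congr 1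
  field_simp

lemma two_pow_eq {α : ℝ} : (2:ℝ)^(α-1) = 4^(α/2)/2 := by
  rw [show (4:ℝ) = 2^(2:ℝ) by norm_num [Real.rpow_natCast], ← Real.rpow_mul (by norm_num),
    Real.rpow_sub (by norm_num), Real.rpow_one]
  ring_nf

lemma ca_pow {α : ℝ} (hα0 : 0 < α) :
    (1/12:ℝ)^(α/2) * ((2:ℝ)^(1-1/α))^α = (1/3:ℝ)^(α/2)/2 := by
  rw [a_pow hα0, two_pow_eq,
    show ((1/12:ℝ)^(α/2) * (4^(α/2)/2)) = ((1/12:ℝ)^(α/2) * 4^(α/2))/2 by ring,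
    ← Real.mul_rpow (by norm_num) (by norm_num)]
  norm_num

lemma claimA {α s Φ : ℝ} (hα0 : 0 < α) (hα2 : α < 2) (hs : 0 ≤ s) (hs12 : s^2 ≤ 12)
    (hquart : s^2 - s^4/12 ≤ Φ) :
    s^α - (1/12 : ℝ)^(α/2) * s^(2*α) ≤ Φ^(α/2) := by
  set p := α/2 with hp
  have hp0 : 0 < p := by positivity
  have hp1 : p ≤ 1 := by rw [hp]; linarith
  have hx : (0:ℝ) ≤ s^2 - s^4/12 := by nlinarith
  have hy : (0:ℝ) ≤ s^4/12 := by positivity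
  have hΦ0 : (0:ℝ) ≤ Φ := le_trans hx hquart
  have h1 : (s^2 - s^4/12)^p ≤ Φ^p := Real.rpow_le_rpow hx hquart hp0.le
  have h2 : ((s:ℝ)^2)^p ≤ (s^2 - s^4/12)^p + (s^4/12)^p := by
    have := real_rpow_add_le hx hy hp0.le hp1
    rwa [sub_add_cancel] at this
  have e1 : ((s:ℝ)^2)^p = s^α := by
    rw [← Real.rpow_natCast s 2, ← Real.rpow_mul hs]
    norm_num [hp]; ring_nf
  have e2 : ((s:ℝ)^4/12)^p = (1/12 : ℝ)^p * s^(2*α) := by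
    rw [div_rpow (by positivity) (by norm_num : (0:ℝ) ≤ 12),
        div_rpow (by norm_num : (0:ℝ) ≤ 1) (by norm_num : (0:ℝ) ≤ 12),
        ← Real.rpow_natCast s 4, ← Real.rpow_mul hs, Real.one_rpow]
    have h4 : ((4:ℕ):ℝ) * p = 2*α := by push_cast; rw [hp]; ring
    rw [h4]; ring
  rw [e1, e2] at h2
  linarith

lemma claimB {α R s Φ : ℝ} (hα0 : 0 < α) (hα2 : α < 2) (hR : 0 ≤ R)
    (hRa : R ≤ 2^(1-1/α)) (hRs : R ≤ s)
    (hquart : s^2 - s^4/12 ≤ Φ) (hquad : 4/π^2*s^2 ≤ Φ) :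
    R^α - (1/12 : ℝ)^(α/2) * R^(2*α) ≤ Φ^(α/2) := by
  set a : ℝ := 2^(1-1/α) with hadef
  set c : ℝ := (1/12 : ℝ)^(α/2) with hcdef
  set p : ℝ := α/2 with hpdef
  have hp0 : 0 < p := by positivity
  have hc0 : 0 < c := Real.rpow_pos_of_pos (by norm_num) _
  have ha0 : 0 < a := Real.rpow_pos_of_pos (by norm_num) _
  have hs0 : 0 ≤ s := hR.trans hRs
  have ha2 : a ≤ 2 := by
    calc a ≤ (2:ℝ)^(1:ℝ) := Real.rpow_le_rpow_of_exponent_le (by norm_num) (by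
      have : 0 < 1/α := by positivity
      linarith)
    _ = 2 := Real.rpow_one 2
  have haα : a^α = 4^p/2 := by rw [hadef, a_pow hα0, two_pow_eq]
  have hca : c * a^α = (1/3 : ℝ)^p / 2 := by
    rw [haα, hcdef, show ((1/12:ℝ)^p * (4^p/2)) = ((1/12:ℝ)^p * 4^p)/2 by ring,
      ← Real.mul_rpow (by norm_num) (by norm_num)]
    norm_num
  have hRα : R^α ≤ a^α := Real.rpow_le_rpow hR hRa hα0.le
  rcases le_or_gt s (Real.sqrt 3 * a) with hs3 | hs3
  · have hsq3 : (Real.sqrt 3)^2 = 3 := Real.sq_sqrt (by norm_num)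
    have hs12 : s^2 ≤ 12 := by
      have h1 : s ≤ Real.sqrt 3 * 2 := hs3.trans (by nlinarith [Real.sqrt_nonneg 3])
      nlinarith [Real.sqrt_nonneg 3]
    have hsα : s^α ≤ (Real.sqrt 3)^α * a^α := by
      rw [← Real.mul_rpow (Real.sqrt_nonneg 3) ha0.le]
      exact Real.rpow_le_rpow hs0 hs3 hα0.le
    have h3α : (Real.sqrt 3)^α = 3^p := by
      rw [Real.sqrt_eq_rpow, ← Real.rpow_mul (by norm_num)]
      congr 1; rw [hpdef]; ring
    have hc3 : c * ((Real.sqrt 3)^α * a^α) = 1/2 := by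
      rw [h3α, haα, hcdef,
        show ((1/12:ℝ)^p * (3^p * (4^p/2))) = ((1/12:ℝ)^p * 3^p * 4^p)/2 by ring,
        ← Real.mul_rpow (by norm_num) (by norm_num),
        ← Real.mul_rpow (by norm_num) (by norm_num)]
      norm_num [Real.one_rpow]
    have hkey : c * (R^α + s^α) ≤ 1 := by
      have h13 : (1/3 : ℝ)^p ≤ 1 := Real.rpow_le_one (by norm_num) (by norm_num) hp0.le
      have h := mul_le_mul_of_nonneg_left (add_le_add hRα hsα) hc0.le
      rw [mul_add] at h
      rw [mul_add]
      linarith [hca, hc3, h]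
    calc R^α - c*R^(2*α) ≤ s^α - c*s^(2*α) := psi_mono hα0 hc0.le hR hRs hkey
      _ ≤ Φ^p := by rw [hpdef, hcdef, hpdef]; exact claimA hα0 hα2 hs0 hs12 hquart
  · have hpi : π^2 ≤ 12 := by nlinarith [Real.pi_lt_d2, Real.pi_pos]
    have hπ0 : (0:ℝ) < π^2 := by positivity
    have hs2 : 3 * a^2 ≤ s^2 := by
      have h := pow_le_pow_left₀ (mul_nonneg (Real.sqrt_nonneg 3) ha0.le) hs3.le 2
      rw [mul_pow, Real.sq_sqrt (by norm_num : (0:ℝ) ≤ 3)] at h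
      exact h
    have h1 : R^2 ≤ a^2 := by nlinarith
    have hq2 : 4*s^2 ≤ Φ*π^2 := by
      have h := mul_le_mul_of_nonneg_right hquad hπ0.le
      calc 4*s^2 = 4/π^2*s^2*π^2 := by field_simp
      _ ≤ Φ*π^2 := h
    have hΦR : R^2 ≤ Φ := by
      nlinarith [sq_nonneg a]
    have hΦp : R^α ≤ Φ^p := by
      have h := Real.rpow_le_rpow (sq_nonneg R) hΦR hp0.le
      rwa [← Real.rpow_natCast R 2, ← Real.rpow_mul hR,
        show ((2:ℕ):ℝ) * p = α by push_cast; rw [hpdef]; ring] at h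
    have h0 : 0 ≤ c * R^(2*α) := mul_nonneg hc0.le (Real.rpow_nonneg hR _)
    linarith

lemma euclidean_nontrivial {d : ℕ} (hd : 1 ≤ d) :
    Nontrivial (EuclideanSpace ℝ (Fin d)) :=
  ⟨⟨0, EuclideanSpace.single ⟨0, hd⟩ 1, by
    intro h
    have := congrArg (fun f : EuclideanSpace ℝ (Fin d) => f ⟨0, hd⟩) h
    simp [EuclideanSpace.single] at this⟩⟩

lemma polar_int (d : ℕ) (hd : 1 ≤ d) (R β : ℝ) (hR : 0 < R) (hβ : 0 < β) :
    ∫ z in Metric.ball (0:EuclideanSpace ℝ (Fin d)) R, ‖z‖^β =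
      (d:ℝ) * (volume (Metric.ball (0:EuclideanSpace ℝ (Fin d)) 1)).toReal
        * (R^((d:ℝ)+β) / ((d:ℝ)+β)) := by
  haveI : Nontrivial (EuclideanSpace ℝ (Fin d)) := euclidean_nontrivial hd
  have hdim : Module.finrank ℝ (EuclideanSpace ℝ (Fin d)) = d := finrank_euclideanSpace_fin
  set f : ℝ → ℝ := fun y => if y < R then y^β else 0 with hf
  have step1 : ∫ z in Metric.ball (0:EuclideanSpace ℝ (Fin d)) R, ‖z‖^β
      = ∫ z : EuclideanSpace ℝ (Fin d), f ‖z‖ := by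
    rw [← integral_indicator measurableSet_ball]
    congr 1; ext z
    by_cases h : z ∈ Metric.ball (0:EuclideanSpace ℝ (Fin d)) R
    · rw [Set.indicator_of_mem h]
      rw [mem_ball_zero_iff] at h
      simp [hf, h]
    · rw [Set.indicator_of_notMem h]
      rw [mem_ball_zero_iff] at h
      simp [hf, h]
  rw [step1, integral_fun_norm_addHaar volume f, hdim]
  have step2 : ∫ y in Set.Ioi (0:ℝ), y ^ (d - 1) • f y
      = ∫ y in Set.Ioo (0:ℝ) R, y^((d:ℝ)-1+β) := by
    rw [← integral_indicator measurableSet_Ioo, setIntegral_congr_fun measurableSet_Ioi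
      (g := fun y => Set.indicator (Set.Ioo 0 R) (fun y => y^((d:ℝ)-1+β)) y) ?_,
      integral_indicator measurableSet_Ioo, integral_indicator measurableSet_Ioo,
      Measure.restrict_restrict measurableSet_Ioo,
      Set.inter_eq_self_of_subset_left (fun y hy => hy.1)]
    intro y hy
    have hy0 : (0:ℝ) < y := hy
    dsimp only
    by_cases h : y < R
    · rw [Set.indicator_of_mem (show y ∈ Set.Ioo (0:ℝ) R from ⟨hy0, h⟩)]
      simp only [hf, if_pos h, smul_eq_mul]
      rw [← Real.rpow_natCast y (d-1), ← Real.rpow_add hy0]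
      congr 1
      have : ((d - 1 : ℕ) : ℝ) = (d:ℝ) - 1 := by
        have := Nat.cast_sub hd (R := ℝ); simpa using this
      rw [this]
    · rw [Set.indicator_of_notMem (show y ∉ Set.Ioo (0:ℝ) R from fun hc => h hc.2)]
      simp [hf, if_neg h]
  rw [step2]
  have step3 : ∫ y in Set.Ioo (0:ℝ) R, y^((d:ℝ)-1+β) = R^((d:ℝ)+β) / ((d:ℝ)+β) := by
    rw [← integral_Ioc_eq_integral_Ioo, ← intervalIntegral.integral_of_le hR.le,
      integral_rpow (Or.inl (by
        have : (1:ℝ) ≤ (d:ℝ) := by exact_mod_cast hd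
        linarith))]
    have h1 : (d:ℝ) - 1 + β + 1 = (d:ℝ) + β := by ring
    rw [h1, Real.zero_rpow (by positivity : (0:ℝ) < (d:ℝ)+β).ne']
    ring
  rw [step3, nsmul_eq_mul, smul_eq_mul, measureReal_def]
  ring

set_option maxHeartbeats 3000000 in
theorem li_yau_integral_inequality (d : ℕ) (hd : 1 ≤ d) (α : ℝ) (hα0 : 0 < α) (hα2 : α < 2)
    (M K : ℝ) (hM : 0 < M) (hK : 0 < K)
    (Vd : ℝ) (hVd : Vd = (volume (Metric.ball (0 : EuclideanSpace ℝ (Fin d)) 1)).toReal)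
    (ha : (K / (M * Vd)) ^ ((1 : ℝ) / d) ≤ 2 ^ (1 - 1 / α))
    (F : EuclideanSpace ℝ (Fin d) → ℝ) (hFmeas : Measurable F)
    (hF0 : ∀ z, 0 ≤ F z) (hFM : ∀ z, F z ≤ M)
    (hFint : K ≤ ∫ z in {z : EuclideanSpace ℝ (Fin d) | ∀ i, z i ∈ Set.Icc (-π) π}, F z) :
    ∫ z in {z : EuclideanSpace ℝ (Fin d) | ∀ i, z i ∈ Set.Icc (-π) π},
        (∑ i, (2 - 2 * Real.cos (z i))) ^ (α / 2) * F z ≥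
      d * K / (d + α) * (K / (M * Vd)) ^ (α / d) -
        (1 / 12 : ℝ) ^ (α / 2) * (d * K / (d + 2 * α)) * (K / (M * Vd)) ^ (2 * α / d) := by
  classical
  haveI : Nontrivial (EuclideanSpace ℝ (Fin d)) := euclidean_nontrivial hd
  set C : Set (EuclideanSpace ℝ (Fin d)) := {z | ∀ i, z i ∈ Set.Icc (-π) π} with hCdef
  set x₀ : ℝ := K / (M * Vd) with hx₀def
  set R : ℝ := x₀ ^ ((1:ℝ)/d) with hRdef
  set B : Set (EuclideanSpace ℝ (Fin d)) := Metric.ball 0 R with hBdef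
  have hd1 : (1:ℝ) ≤ (d:ℝ) := by exact_mod_cast hd
  have hd0 : (0:ℝ) < d := by linarith
  have hVd0 : 0 < Vd := by
    rw [hVd]
    exact ENNReal.toReal_pos (measure_ball_pos volume 0 one_pos).ne' measure_ball_lt_top.ne
  have hMV : 0 < M * Vd := mul_pos hM hVd0
  have hx₀ : 0 < x₀ := div_pos hK hMV
  have hR0 : 0 < R := Real.rpow_pos_of_pos hx₀ _
  have hp0 : 0 < α/2 := by linarith
  have hexp : 1 - 1/α ≤ 1 := by
    have h : 0 < 1/α := by positivity
    linarith
  have ha2 : (2:ℝ)^(1-1/α) ≤ 2 := by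
    calc (2:ℝ)^(1-1/α) ≤ (2:ℝ)^(1:ℝ) := Real.rpow_le_rpow_of_exponent_le (by norm_num) hexp
    _ = 2 := Real.rpow_one 2
  have hR2 : R ≤ 2 := le_trans ha ha2
  have hRd : R ^ ((d:ℝ)) = x₀ := by
    rw [hRdef, ← Real.rpow_mul hx₀.le, show (1:ℝ)/d * d = 1 by field_simp, Real.rpow_one]
  have hMK : M * (x₀ * Vd) = K := by rw [hx₀def]; field_simp
  have hc0 : (0:ℝ) < (1/12:ℝ)^(α/2) := Real.rpow_pos_of_pos (by norm_num) _
  -- membership facts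
  have hzC : ∀ z ∈ C, ∀ i, |z i| ≤ π := by
    intro z hz i
    have hz' : ∀ i, z i ∈ Set.Icc (-π) π := hz
    exact abs_le.mpr ⟨(hz' i).1, (hz' i).2⟩
  have hBC : B ⊆ C := by
    intro z hz
    rw [hBdef, mem_ball_zero_iff] at hz
    intro i
    have h2 : (z i)^2 ≤ ‖z‖^2 := by
      rw [norm_sq_eq]
      exact Finset.single_le_sum (f := fun j => (z j)^2) (fun j _ => sq_nonneg _)
        (Finset.mem_univ i)
    have h1 : |z i| ≤ ‖z‖ := by
      calc |z i| = Real.sqrt ((z i)^2) := (Real.sqrt_sq_eq_abs _).symm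
      _ ≤ Real.sqrt (‖z‖^2) := Real.sqrt_le_sqrt h2
      _ = ‖z‖ := Real.sqrt_sq (norm_nonneg z)
    have hpi3 := Real.pi_gt_three
    have habs : |z i| ≤ π := by linarith
    exact Set.mem_Icc.2 (abs_le.1 habs)
  have hCmeas : MeasurableSet C := by
    have hCeq : C = ⋂ i, (fun z : EuclideanSpace ℝ (Fin d) => z i) ⁻¹' (Set.Icc (-π) π) := by
      ext z; simp [hCdef, Set.mem_iInter]
    rw [hCeq]
    exact MeasurableSet.iInter fun i =>
      ((EuclideanSpace.proj i : EuclideanSpace ℝ (Fin d) →L[ℝ] ℝ).continuous.measurable) measurableSet_Icc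
  set N : ℝ := Real.sqrt d * π with hN
  have hN0 : 0 ≤ N := by positivity
  have hNormC : ∀ z ∈ C, ‖z‖ ≤ N := by
    intro z hz
    have h1 : ‖z‖^2 ≤ (d:ℝ)*π^2 := by
      rw [norm_sq_eq]
      calc ∑ i, (z i)^2 ≤ ∑ _i : Fin d, π^2 := Finset.sum_le_sum (fun i _ => by
            have h := abs_le.1 (hzC z hz i); nlinarith [h.1, h.2])
      _ = (d:ℝ)*π^2 := by rw [Finset.sum_const, Finset.card_fin, nsmul_eq_mul]
    have h3 : N^2 = (d:ℝ)*π^2 := by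
      rw [hN, mul_pow, Real.sq_sqrt (by positivity : (0:ℝ) ≤ (d:ℝ))]
    nlinarith [norm_nonneg z, hN0]
  have hCvol : volume C ≠ ⊤ := by
    have hsub : C ⊆ Metric.closedBall 0 N := by
      intro z hz
      rw [Metric.mem_closedBall, dist_zero_right]
      exact hNormC z hz
    exact (lt_of_le_of_lt (measure_mono hsub) measure_closedBall_lt_top).ne
  -- pointwise facts about Φ
  have hΦ0 : ∀ z : EuclideanSpace ℝ (Fin d), 0 ≤ ∑ i, (2 - 2*Real.cos (z i)) :=
    fun z => Finset.sum_nonneg fun i _ => by nlinarith [Real.cos_le_one (z i)]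
  have hΦ4d : ∀ z : EuclideanSpace ℝ (Fin d), ∑ i, (2 - 2*Real.cos (z i)) ≤ 4*d := by
    intro z
    calc ∑ i, (2 - 2*Real.cos (z i)) ≤ ∑ _i : Fin d, (4:ℝ) :=
          Finset.sum_le_sum fun i _ => by nlinarith [Real.neg_one_le_cos (z i)]
    _ = 4*d := by rw [Finset.sum_const, Finset.card_fin, nsmul_eq_mul]; ring
  have hquart : ∀ z : EuclideanSpace ℝ (Fin d),
      ‖z‖^2 - ‖z‖^4/12 ≤ ∑ i, (2 - 2*Real.cos (z i)) := by
    intro z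
    have h1 : ∑ i, ((z i)^2 - (z i)^4/12) ≤ ∑ i, (2 - 2*Real.cos (z i)) :=
      Finset.sum_le_sum fun i _ => aux_coord_lb2 (z i)
    have h2 : ∑ i, ((z i)^2 - (z i)^4/12) = (∑ i, (z i)^2) - (∑ i, (z i)^4)/12 := by
      rw [Finset.sum_sub_distrib, ← Finset.sum_div]
    have h3 := sum_pow4_le d z
    have h4 := norm_sq_eq d z
    have h5 : ‖z‖^4 = (∑ i, (z i)^2)^2 := by rw [← h4]; ring
    linarith
  have hquad : ∀ z ∈ C, 4/π^2*‖z‖^2 ≤ ∑ i, (2 - 2*Real.cos (z i)) := by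
    intro z hz
    have h1 : ∑ i, (4/π^2*(z i)^2) ≤ ∑ i, (2 - 2*Real.cos (z i)) :=
      Finset.sum_le_sum fun i _ => aux_coord_lb (hzC z hz i)
    rw [← Finset.mul_sum] at h1
    rw [norm_sq_eq d z]
    exact h1
  -- scalar facts
  have hkey2 : ∀ s : ℝ, 0 ≤ s → s ≤ R → (1/12:ℝ)^(α/2) * (s^α + R^α) ≤ 1 := by
    intro s hs hsR
    have h1 : s^α ≤ ((2:ℝ)^(1-1/α))^α := Real.rpow_le_rpow hs (hsR.trans ha) hα0.le
    have h2 : R^α ≤ ((2:ℝ)^(1-1/α))^α := Real.rpow_le_rpow hR0.le ha hα0.le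
    have h3 := ca_pow hα0
    have h13 : (1/3:ℝ)^(α/2) ≤ 1 :=
      Real.rpow_le_one (by norm_num) (by norm_num) (by positivity)
    have hca' : (1/12:ℝ)^(α/2) * (s^α + R^α)
        ≤ (1/12:ℝ)^(α/2) * (((2:ℝ)^(1-1/α))^α + ((2:ℝ)^(1-1/α))^α) :=
      mul_le_mul_of_nonneg_left (add_le_add h1 h2) hc0.le
    have he : (1/12:ℝ)^(α/2) * (((2:ℝ)^(1-1/α))^α + ((2:ℝ)^(1-1/α))^α) = (1/3:ℝ)^(α/2) := by
      calc (1/12:ℝ)^(α/2) * (((2:ℝ)^(1-1/α))^α + ((2:ℝ)^(1-1/α))^α)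
          = 2*((1/12:ℝ)^(α/2) * ((2:ℝ)^(1-1/α))^α) := by ring
      _ = 2*((1/3:ℝ)^(α/2)/2) := by rw [h3]
      _ = (1/3:ℝ)^(α/2) := by ring
    linarith [hca', he, h13]
  have hψR0 : 0 ≤ R^α - (1/12:ℝ)^(α/2) * R^(2*α) := by
    have hz : (0:ℝ)^α = 0 := Real.zero_rpow hα0.ne'
    have hz2 : (0:ℝ)^(2*α) = 0 := Real.zero_rpow (by positivity : (0:ℝ) < 2*α).ne'
    have h := psi_mono hα0 hc0.le le_rfl hR0.le (hkey2 0 le_rfl hR0.le)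
    rw [hz, hz2] at h
    simpa using h
  -- pointwise integrand inequalities
  have hAB : ∀ z ∈ B, (R^α - (1/12:ℝ)^(α/2)*R^(2*α)) * F z
        + M * (‖z‖^α - (1/12:ℝ)^(α/2)*‖z‖^(2*α))
        - (R^α - (1/12:ℝ)^(α/2)*R^(2*α)) * M
      ≤ (∑ i, (2 - 2 * Real.cos (z i))) ^ (α / 2) * F z := by
    intro z hz
    rw [hBdef, mem_ball_zero_iff] at hz
    have hs : ‖z‖ ≤ R := hz.le
    have t1 : ‖z‖^α - (1/12:ℝ)^(α/2)*‖z‖^(2*α)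
        ≤ (∑ i, (2 - 2 * Real.cos (z i))) ^ (α / 2) :=
      claimA hα0 hα2 (norm_nonneg z) (by nlinarith [norm_nonneg z]) (hquart z)
    have t2 : ‖z‖^α - (1/12:ℝ)^(α/2)*‖z‖^(2*α) ≤ R^α - (1/12:ℝ)^(α/2)*R^(2*α) :=
      psi_mono hα0 hc0.le (norm_nonneg z) hs (hkey2 ‖z‖ (norm_nonneg z) hs)
    nlinarith [mul_nonneg (sub_nonneg.2 t1) (hF0 z),
      mul_nonneg (sub_nonneg.2 t2) (sub_nonneg.2 (hFM z))]
  have hCB : ∀ z ∈ C \ B, (R^α - (1/12:ℝ)^(α/2)*R^(2*α)) * F z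
      ≤ (∑ i, (2 - 2 * Real.cos (z i))) ^ (α / 2) * F z := by
    intro z hz
    have hz2 : R ≤ ‖z‖ :=
      not_lt.1 (fun hc => hz.2 (by rw [hBdef, mem_ball_zero_iff]; exact hc))
    exact mul_le_mul_of_nonneg_right
      (claimB hα0 hα2 hR0.le ha hz2 (hquart z) (hquad z hz.1)) (hF0 z)
  -- measurability and integrability
  have hΦbase : Measurable fun z : EuclideanSpace ℝ (Fin d) => ∑ i, (2 - 2*Real.cos (z i)) := by
    apply Finset.measurable_sum
    intro i _
    exact measurable_const.sub
      (((EuclideanSpace.proj i : EuclideanSpace ℝ (Fin d) →L[ℝ] ℝ).continuous.measurable).cos.const_mul 2)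
  have hΦmeas : Measurable fun z : EuclideanSpace ℝ (Fin d) =>
      (∑ i, (2 - 2*Real.cos (z i)))^(α/2) :=
    (Real.continuous_rpow_const hp0.le).measurable.comp hΦbase
  have hnormmeas : ∀ β : ℝ, 0 ≤ β →
      Measurable fun z : EuclideanSpace ℝ (Fin d) => ‖z‖^β := fun β hβ =>
    (Real.continuous_rpow_const hβ).measurable.comp measurable_norm
  have mkInt : ∀ (G : EuclideanSpace ℝ (Fin d) → ℝ) (Bd : ℝ), Measurable G →
      (∀ z ∈ C, ‖G z‖ ≤ Bd) → IntegrableOn G C := fun G Bd hGm hGb =>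
    Measure.integrableOn_of_bounded hCvol hGm.aestronglyMeasurable
      (by filter_upwards [ae_restrict_mem hCmeas] with z hz using hGb z hz)
  have intF : IntegrableOn F C := mkInt F M hFmeas fun z _ => by
    rw [Real.norm_eq_abs, abs_of_nonneg (hF0 z)]; exact hFM z
  have intg : IntegrableOn (fun z => (∑ i, (2 - 2*Real.cos (z i)))^(α/2) * F z) C :=
    mkInt _ ((4*d)^(α/2) * M) (hΦmeas.mul hFmeas) fun z _ => by
      rw [Real.norm_eq_abs, abs_of_nonneg (mul_nonneg (Real.rpow_nonneg (hΦ0 z) _) (hF0 z))]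
      exact mul_le_mul (Real.rpow_le_rpow (hΦ0 z) (hΦ4d z) hp0.le) (hFM z) (hF0 z)
        (Real.rpow_nonneg (by positivity) _)
  have hnormbd : ∀ β : ℝ, 0 < β → ∀ z ∈ C, ‖z‖^β ≤ N^β := fun β hβ z hz =>
    Real.rpow_le_rpow (norm_nonneg z) (hNormC z hz) hβ.le
  have intψ : IntegrableOn (fun z => ‖z‖^α - (1/12:ℝ)^(α/2)*‖z‖^(2*α)) C := by
    apply mkInt _ (N^α + (1/12:ℝ)^(α/2)*N^(2*α))
      ((hnormmeas α hα0.le).sub ((hnormmeas (2*α) (by linarith)).const_mul _))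
    intro z hz
    simp only [Real.norm_eq_abs, Pi.sub_apply]
    have b1 := hnormbd α hα0 z hz
    have b2 := hnormbd (2*α) (by linarith) z hz
    have n1 : (0:ℝ) ≤ ‖z‖^α := Real.rpow_nonneg (norm_nonneg z) _
    have n2 : (0:ℝ) ≤ ‖z‖^(2*α) := Real.rpow_nonneg (norm_nonneg z) _
    rw [abs_le]
    constructor <;> nlinarith [hc0, mul_le_mul_of_nonneg_left b2 hc0.le]
  have intα : IntegrableOn (fun z : EuclideanSpace ℝ (Fin d) => ‖z‖^α) C := by
    apply mkInt _ (N^α) (hnormmeas α hα0.le)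
    intro z hz
    rw [Real.norm_eq_abs, abs_of_nonneg (Real.rpow_nonneg (norm_nonneg z) _)]
    exact hnormbd α hα0 z hz
  have int2α : IntegrableOn (fun z : EuclideanSpace ℝ (Fin d) => ‖z‖^(2*α)) C := by
    apply mkInt _ (N^(2*α)) (hnormmeas (2*α) (by linarith))
    intro z hz
    rw [Real.norm_eq_abs, abs_of_nonneg (Real.rpow_nonneg (norm_nonneg z) _)]
    exact hnormbd (2*α) (by linarith) z hz
  have hBmeas : MeasurableSet B := measurableSet_ball
  have intconst : IntegrableOn
      (fun _ : EuclideanSpace ℝ (Fin d) => (R^α - (1/12:ℝ)^(α/2)*R^(2*α)) * M) B := by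
    refine integrableOn_const ?_
    rw [hBdef]
    exact measure_ball_lt_top.ne
  -- splitting the integrals
  have hsplit : ∫ z in C, (∑ i, (2 - 2 * Real.cos (z i))) ^ (α / 2) * F z
      = (∫ z in B, (∑ i, (2 - 2 * Real.cos (z i))) ^ (α / 2) * F z)
        + ∫ z in C \ B, (∑ i, (2 - 2 * Real.cos (z i))) ^ (α / 2) * F z := by
    have h := setIntegral_union (f := fun z => (∑ i, (2 - 2 * Real.cos (z i))) ^ (α / 2) * F z)
      (μ := volume) (Set.disjoint_sdiff_right) (hCmeas.diff hBmeas)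
      (intg.mono_set hBC) (intg.mono_set Set.diff_subset)
    rwa [Set.union_diff_cancel hBC] at h
  have hFsplit : ∫ z in C, F z = (∫ z in B, F z) + ∫ z in C \ B, F z := by
    have h := setIntegral_union (f := F) (μ := volume) (Set.disjoint_sdiff_right)
      (hCmeas.diff hBmeas) (intF.mono_set hBC) (intF.mono_set Set.diff_subset)
    rwa [Set.union_diff_cancel hBC] at h
  -- lower bound on the ball
  have hIB : ∫ z in B, ((R^α - (1/12:ℝ)^(α/2)*R^(2*α)) * F z
        + M * (‖z‖^α - (1/12:ℝ)^(α/2)*‖z‖^(2*α))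
        - (R^α - (1/12:ℝ)^(α/2)*R^(2*α)) * M)
      ≤ ∫ z in B, (∑ i, (2 - 2 * Real.cos (z i))) ^ (α / 2) * F z :=
    setIntegral_mono_on
      ((((intF.mono_set hBC).const_mul _).add ((intψ.mono_set hBC).const_mul M)).sub intconst)
      (intg.mono_set hBC) hBmeas hAB
  have hIBeval : ∫ z in B, ((R^α - (1/12:ℝ)^(α/2)*R^(2*α)) * F z
        + M * (‖z‖^α - (1/12:ℝ)^(α/2)*‖z‖^(2*α))
        - (R^α - (1/12:ℝ)^(α/2)*R^(2*α)) * M)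
      = (R^α - (1/12:ℝ)^(α/2)*R^(2*α)) * (∫ z in B, F z)
        + M * (∫ z in B, (‖z‖^α - (1/12:ℝ)^(α/2)*‖z‖^(2*α)))
        - (R^α - (1/12:ℝ)^(α/2)*R^(2*α)) * M * (volume B).toReal := by
    have e3 : ∫ z in B, ((R^α - (1/12:ℝ)^(α/2)*R^(2*α)) * F z
          + M * (‖z‖^α - (1/12:ℝ)^(α/2)*‖z‖^(2*α))
          - (R^α - (1/12:ℝ)^(α/2)*R^(2*α)) * M)
        = (∫ z in B, ((R^α - (1/12:ℝ)^(α/2)*R^(2*α)) * F z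
            + M * (‖z‖^α - (1/12:ℝ)^(α/2)*‖z‖^(2*α))))
          - ∫ _z in B, (R^α - (1/12:ℝ)^(α/2)*R^(2*α)) * M :=
      integral_sub (((intF.mono_set hBC).const_mul _).add ((intψ.mono_set hBC).const_mul M))
        intconst
    have e4 : ∫ z in B, ((R^α - (1/12:ℝ)^(α/2)*R^(2*α)) * F z
          + M * (‖z‖^α - (1/12:ℝ)^(α/2)*‖z‖^(2*α)))
        = (∫ z in B, (R^α - (1/12:ℝ)^(α/2)*R^(2*α)) * F z)
          + ∫ z in B, M * (‖z‖^α - (1/12:ℝ)^(α/2)*‖z‖^(2*α)) :=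
      integral_add ((intF.mono_set hBC).const_mul _) ((intψ.mono_set hBC).const_mul M)
    have e1 : ∫ z in B, (R^α - (1/12:ℝ)^(α/2)*R^(2*α)) * F z
        = (R^α - (1/12:ℝ)^(α/2)*R^(2*α)) * ∫ z in B, F z := integral_const_mul _ _
    have e2 : ∫ z in B, M * (‖z‖^α - (1/12:ℝ)^(α/2)*‖z‖^(2*α))
        = M * ∫ z in B, (‖z‖^α - (1/12:ℝ)^(α/2)*‖z‖^(2*α)) := integral_const_mul _ _
    have e5 : ∫ _z in B, (R^α - (1/12:ℝ)^(α/2)*R^(2*α)) * M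
        = (volume B).toReal • ((R^α - (1/12:ℝ)^(α/2)*R^(2*α)) * M) := setIntegral_const _
    rw [e3, e4, e1, e2, e5, smul_eq_mul]
    ring
  have hICB : (R^α - (1/12:ℝ)^(α/2)*R^(2*α)) * (∫ z in C \ B, F z)
      ≤ ∫ z in C \ B, (∑ i, (2 - 2 * Real.cos (z i))) ^ (α / 2) * F z := by
    have h := setIntegral_mono_on ((intF.mono_set Set.diff_subset).const_mul _)
      (intg.mono_set Set.diff_subset) (hCmeas.diff hBmeas) hCB
    rwa [integral_const_mul] at h
  -- volume of the ball
  have hVB : (volume B).toReal = x₀ * Vd := by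
    rw [hBdef, Measure.addHaar_ball volume 0 hR0.le, finrank_euclideanSpace_fin,
      ENNReal.toReal_mul, ENNReal.toReal_ofReal (by positivity), ← hVd,
      ← Real.rpow_natCast R d, hRd]
  have hKVB : M * (volume B).toReal = K := by rw [hVB]; exact hMK
  -- main estimate
  have main : M * (∫ z in B, (‖z‖^α - (1/12:ℝ)^(α/2)*‖z‖^(2*α)))
      ≤ ∫ z in C, (∑ i, (2 - 2 * Real.cos (z i))) ^ (α / 2) * F z := by
    rw [hsplit]
    rw [hFsplit] at hFint
    have e1 : (R^α - (1/12:ℝ)^(α/2)*R^(2*α)) * M * (volume B).toReal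
        = (R^α - (1/12:ℝ)^(α/2)*R^(2*α)) * K := by
      rw [mul_assoc, hKVB]
    nlinarith [hIB, hICB, hIBeval, e1,
      mul_nonneg hψR0 (sub_nonneg.2 hFint)]
  -- evaluation of the radial integral
  have hI2 : ∫ z in B, (‖z‖^α - (1/12:ℝ)^(α/2)*‖z‖^(2*α))
      = (d:ℝ)*Vd*(R^((d:ℝ)+α)/((d:ℝ)+α))
        - (1/12:ℝ)^(α/2)*((d:ℝ)*Vd*(R^((d:ℝ)+2*α)/((d:ℝ)+2*α))) := by
    have e1 : ∫ z in B, (‖z‖^α - (1/12:ℝ)^(α/2)*‖z‖^(2*α))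
        = (∫ z in B, ‖z‖^α) - ∫ z in B, (1/12:ℝ)^(α/2)*‖z‖^(2*α) :=
      integral_sub (intα.mono_set hBC) ((int2α.mono_set hBC).const_mul _)
    have e2 : ∫ z in B, (1/12:ℝ)^(α/2)*‖z‖^(2*α)
        = (1/12:ℝ)^(α/2) * ∫ z in B, ‖z‖^(2*α) := integral_const_mul _ _
    rw [e1, e2, hBdef, polar_int d hd R α hR0 hα0,
      polar_int d hd R (2*α) hR0 (by linarith), ← hVd]
  have hRα : R ^ ((d:ℝ)+α) = x₀ * x₀^(α/(d:ℝ)) := by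
    rw [Real.rpow_add hR0, hRd, hRdef, ← Real.rpow_mul hx₀.le]
    congr 2
    ring
  have hR2α : R ^ ((d:ℝ)+2*α) = x₀ * x₀^(2*α/(d:ℝ)) := by
    rw [Real.rpow_add hR0, hRd, hRdef, ← Real.rpow_mul hx₀.le]
    congr 2
    ring
  have hfinal : M * (∫ z in B, (‖z‖^α - (1/12:ℝ)^(α/2)*‖z‖^(2*α)))
      = ↑d * K / (↑d + α) * x₀ ^ (α / ↑d)
        - (1 / 12 : ℝ) ^ (α / 2) * (↑d * K / (↑d + 2 * α)) * x₀ ^ (2 * α / ↑d) := by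
    rw [hI2, hRα, hR2α, ← hMK]
    ring
  rw [ge_iff_le, ← hfinal]
  exact main
end

section
/- Let G be a countable graph with heat kernel p(t,x,y) satisfying p(0,x,x)=1, p continuous in t, and |∂_t p(t,x,x)| bounded near t=0, and suppose Σ_{y} p(t,x,y) = 1 for all t > 0 (stochastic completeness). Fix 0 < α < 2 and define Q_α(x,y) = (1/|Γ(-α/2)|) ∫_0^∞ t^{-1-α/2} p(t,x,y) dt for x ≠ y. Then Σ_{y ≠ x} Q_α(x,y) < ∞ for every vertex x. -/
open Real MeasureTheory

/-- The jump kernel coefficients of the fractional Laplacian, as extended nonnegative reals. -/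
noncomputable def Qcoef {G : Type*} (α : ℝ) (p : ℝ → G → G → ℝ) (x y : G) : ENNReal :=
  ENNReal.ofReal (1 / |Real.Gamma (-(α / 2))|) *
    ∫⁻ t in Set.Ioi (0 : ℝ), ENNReal.ofReal (t ^ (-1 - α / 2) * p t x y)

/-- Countable superadditivity of the lower Lebesgue integral, no measurability needed. -/
lemma tsum_lintegral_le_aux {β ι : Type*} [Countable ι] [MeasurableSpace β] (μ : Measure β)
    (f : ι → β → ENNReal) : ∑' i, ∫⁻ a, f i a ∂μ ≤ ∫⁻ a, ∑' i, f i a ∂μ := by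
  classical
  rw [ENNReal.tsum_eq_iSup_sum]
  refine iSup_le fun s => ?_
  have h1 : ∑ i ∈ s, ∫⁻ a, f i a ∂μ ≤ ∫⁻ a, ∑ i ∈ s, f i a ∂μ := by
    induction s using Finset.induction_on with
    | empty => simp
    | @insert j s' h ih =>
        rw [Finset.sum_insert h]
        simp_rw [Finset.sum_insert h]
        calc ∫⁻ a, f j a ∂μ + ∑ i ∈ s', ∫⁻ a, f i a ∂μ
            ≤ ∫⁻ a, f j a ∂μ + ∫⁻ a, ∑ i ∈ s', f i a ∂μ := add_le_add le_rfl ih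
          _ ≤ ∫⁻ a, (fun a => f j a) a + (fun a => ∑ i ∈ s', f i a) a ∂μ :=
              le_lintegral_add _ _
  refine h1.trans (lintegral_mono fun a => ?_)
  exact ENNReal.sum_le_tsum s

lemma measurable_rpow_const_aux (r : ℝ) : Measurable fun t : ℝ => t ^ r := by
  measurability

theorem jump_kernel_summable {G : Type*} [Countable G]
    (p : ℝ → G → G → ℝ)
    (hp_nonneg : ∀ t x y, 0 ≤ t → 0 ≤ p t x y)
    (hp_init : ∀ x, p 0 x x = 1)
    (hp_cont : ∀ x, ContinuousOn (fun t => p t x x) (Set.Ici (0 : ℝ)))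
    (hp_deriv : ∀ x, ∃ ε > (0 : ℝ), ∃ c : ℝ, ∀ t ∈ Set.Ioo (0 : ℝ) ε,
      DifferentiableAt ℝ (fun s => p s x x) t ∧ |deriv (fun s => p s x x) t| ≤ c)
    (hp_stoch : ∀ x, ∀ t > (0 : ℝ), ∑' y, p t x y = 1)
    (hp_summable : ∀ x, ∀ t > (0 : ℝ), Summable fun y => p t x y)
    (α : ℝ) (hα0 : 0 < α) (hα2 : α < 2) (x : G) :
    ∑' y : {y : G // y ≠ x}, Qcoef α p x (y : G) < ⊤ := by
  obtain ⟨ε, hε, c, hc⟩ := hp_deriv x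
  have hc0 : 0 ≤ c :=
    le_trans (abs_nonneg _) (hc (ε / 2) ⟨by positivity, by linarith⟩).2
  set β : ℝ := -1 - α / 2 with hβ
  set δ : ℝ := ε / 2 with hδ
  have hδ0 : 0 < δ := by positivity
  have hδε : δ < ε := by simp only [hδ]; linarith
  -- MVT bound: 1 - p t x x ≤ c * t for 0 < t < ε
  have hmvt : ∀ t ∈ Set.Ioo (0 : ℝ) ε, 1 - p t x x ≤ c * t := by
    intro t ht
    have hcont : ContinuousOn (fun s => p s x x) (Set.Icc 0 t) :=
      (hp_cont x).mono (Set.Icc_subset_Ici_self)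
    have hdiff : DifferentiableOn ℝ (fun s => p s x x) (Set.Ioo 0 t) := by
      intro s hs
      exact (hc s ⟨hs.1, hs.2.trans ht.2⟩).1.differentiableWithinAt
    obtain ⟨ξ, hξ, hξ'⟩ := exists_deriv_eq_slope (fun s => p s x x) ht.1 hcont hdiff
    have hξε : ξ ∈ Set.Ioo (0 : ℝ) ε := ⟨hξ.1, hξ.2.trans ht.2⟩
    have habs := (hc ξ hξε).2
    have : |p t x x - 1| ≤ c * t := by
      have h1 : p t x x - 1 = deriv (fun s => p s x x) ξ * t := by
        rw [hξ', hp_init x, sub_zero]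
        rw [div_mul_eq_mul_div, mul_div_assoc, div_self ht.1.ne', mul_one]
      rw [h1, abs_mul, abs_of_pos ht.1]
      exact mul_le_mul_of_nonneg_right habs ht.1.le
    calc 1 - p t x x ≤ |p t x x - 1| := by rw [abs_sub_comm]; exact le_abs_self _
      _ ≤ c * t := this
  -- the sum over y ≠ x at fixed t > 0
  have hsum_eq : ∀ t : ℝ, 0 < t →
      (∑' y : {y : G // y ≠ x}, ENNReal.ofReal (t ^ β * p t x (y : G)))
        = ENNReal.ofReal (t ^ β * (1 - p t x x)) := by
    intro t ht
    have htβ : 0 ≤ t ^ β := rpow_nonneg ht.le β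
    have hsummable : Summable fun y : {y : G // y ≠ x} => p t x (y : G) :=
      (hp_summable x t ht).subtype _
    have hsum1 : (∑' y : {y : G // y ≠ x}, p t x (y : G)) = 1 - p t x x := by
      have h := (hp_summable x t ht).tsum_subtype_add_tsum_subtype_compl {x}
      rw [hp_stoch x t ht] at h
      have hsing : (∑' y : ({x} : Set G), p t x (y : G)) = p t x x := tsum_singleton x _
      rw [hsing] at h
      have hcompl : (∑' y : ↥({x}ᶜ : Set G), p t x (y : G))
          = ∑' y : {y : G // y ≠ x}, p t x (y : G) := rfl
      rw [hcompl] at h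
      linarith
    calc (∑' y : {y : G // y ≠ x}, ENNReal.ofReal (t ^ β * p t x (y : G)))
        = ENNReal.ofReal (∑' y : {y : G // y ≠ x}, t ^ β * p t x (y : G)) := by
          rw [ENNReal.ofReal_tsum_of_nonneg]
          · intro y; exact mul_nonneg htβ (hp_nonneg t x _ ht.le)
          · exact hsummable.mul_left _
      _ = ENNReal.ofReal (t ^ β * (1 - p t x x)) := by
          rw [tsum_mul_left, hsum1]
  -- the dominating measurable function
  set H : ℝ → ENNReal := fun t =>
    (Set.Ioc (0 : ℝ) δ).indicator (fun t => ENNReal.ofReal (c * t ^ (-(α / 2)))) t +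
    (Set.Ioi δ).indicator (fun t => ENNReal.ofReal (t ^ β)) t with hH
  have hmeas1 : Measurable fun t : ℝ => ENNReal.ofReal (c * t ^ (-(α / 2))) :=
    ((measurable_rpow_const_aux _).const_mul c).ennreal_ofReal
  have hmeas2 : Measurable fun t : ℝ => ENNReal.ofReal (t ^ β) :=
    (measurable_rpow_const_aux β).ennreal_ofReal
  have hHmeas : Measurable H := by
    exact (hmeas1.indicator measurableSet_Ioc).add (hmeas2.indicator measurableSet_Ioi)
  -- pointwise bound on Ioi 0
  have hbound : ∀ t ∈ Set.Ioi (0 : ℝ),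
      (∑' y : {y : G // y ≠ x}, ENNReal.ofReal (t ^ β * p t x (y : G))) ≤ H t := by
    intro t ht
    rw [Set.mem_Ioi] at ht
    rw [hsum_eq t ht]
    by_cases htδ : t ≤ δ
    · have htε : t ∈ Set.Ioo (0 : ℝ) ε := ⟨ht, lt_of_le_of_lt htδ hδε⟩
      have h1 : t ^ β * (1 - p t x x) ≤ c * t ^ (-(α / 2)) := by
        have h2 : t ^ β * (1 - p t x x) ≤ t ^ β * (c * t) :=
          mul_le_mul_of_nonneg_left (hmvt t htε) (rpow_nonneg ht.le β)
        have h3 : t ^ β * (c * t) = c * t ^ (-(α / 2)) := by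
          have : t ^ β * t = t ^ (-(α / 2)) := by
            rw [← Real.rpow_add_one ht.ne' β]
            rw [show β + 1 = -(α / 2) by rw [hβ]; ring]
          calc t ^ β * (c * t) = c * (t ^ β * t) := by ring
            _ = c * t ^ (-(α / 2)) := by rw [this]
        linarith
      calc ENNReal.ofReal (t ^ β * (1 - p t x x)) ≤ ENNReal.ofReal (c * t ^ (-(α / 2))) :=
            ENNReal.ofReal_le_ofReal h1
        _ = (Set.Ioc (0 : ℝ) δ).indicator (fun t => ENNReal.ofReal (c * t ^ (-(α / 2)))) t := by
            rw [Set.indicator_of_mem (Set.mem_Ioc.mpr ⟨ht, htδ⟩)]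
        _ ≤ H t := le_add_of_nonneg_right zero_le
    · push_neg at htδ
      have h1 : t ^ β * (1 - p t x x) ≤ t ^ β := by
        have hp0 : 0 ≤ p t x x := hp_nonneg t x x ht.le
        nlinarith [rpow_nonneg ht.le β]
      calc ENNReal.ofReal (t ^ β * (1 - p t x x)) ≤ ENNReal.ofReal (t ^ β) :=
            ENNReal.ofReal_le_ofReal h1
        _ = (Set.Ioi δ).indicator (fun t => ENNReal.ofReal (t ^ β)) t := by
            rw [Set.indicator_of_mem (Set.mem_Ioi.mpr htδ)]
        _ ≤ H t := le_add_of_nonneg_left zero_le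
  -- integral of H is finite
  have hHfin : ∫⁻ t in Set.Ioi (0 : ℝ), H t < ⊤ := by
    have h1 : IntegrableOn (fun t : ℝ => c * t ^ (-(α / 2))) (Set.Ioc 0 δ) := by
      have := (intervalIntegral.intervalIntegrable_rpow'
        (show (-1 : ℝ) < -(α / 2) by linarith) (a := 0) (b := δ)).1
      exact this.const_mul c
    have h2 : IntegrableOn (fun t : ℝ => t ^ β) (Set.Ioi δ) :=
      integrableOn_Ioi_rpow_of_lt (by rw [hβ]; linarith) hδ0
    rw [hH]
    calc ∫⁻ t in Set.Ioi (0 : ℝ),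
          ((Set.Ioc (0 : ℝ) δ).indicator (fun t => ENNReal.ofReal (c * t ^ (-(α / 2)))) t +
           (Set.Ioi δ).indicator (fun t => ENNReal.ofReal (t ^ β)) t)
        = (∫⁻ t in Set.Ioi (0 : ℝ),
            (Set.Ioc (0 : ℝ) δ).indicator (fun t => ENNReal.ofReal (c * t ^ (-(α / 2)))) t) +
          ∫⁻ t in Set.Ioi (0 : ℝ),
            (Set.Ioi δ).indicator (fun t => ENNReal.ofReal (t ^ β)) t := by
          exact lintegral_add_left (hmeas1.indicator measurableSet_Ioc) _
      _ < ⊤ := by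
          apply ENNReal.add_lt_top.mpr
          constructor
          · rw [lintegral_indicator measurableSet_Ioc,
              Measure.restrict_restrict measurableSet_Ioc]
            have hss : Set.Ioc (0 : ℝ) δ ∩ Set.Ioi 0 = Set.Ioc 0 δ :=
              Set.inter_eq_left.mpr Set.Ioc_subset_Ioi_self
            rw [hss]
            exact h1.lintegral_lt_top
          · rw [lintegral_indicator measurableSet_Ioi,
              Measure.restrict_restrict measurableSet_Ioi]
            have hss : Set.Ioi δ ∩ Set.Ioi 0 = Set.Ioi δ :=
              Set.inter_eq_left.mpr (Set.Ioi_subset_Ioi hδ0.le)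
            rw [hss]
            exact h2.lintegral_lt_top
  -- put it together
  have hmain : (∑' y : {y : G // y ≠ x},
      ∫⁻ t in Set.Ioi (0 : ℝ), ENNReal.ofReal (t ^ β * p t x (y : G))) < ⊤ := by
    calc (∑' y : {y : G // y ≠ x},
          ∫⁻ t in Set.Ioi (0 : ℝ), ENNReal.ofReal (t ^ β * p t x (y : G)))
        ≤ ∫⁻ t in Set.Ioi (0 : ℝ),
            ∑' y : {y : G // y ≠ x}, ENNReal.ofReal (t ^ β * p t x (y : G)) :=
          tsum_lintegral_le_aux _ _
      _ ≤ ∫⁻ t in Set.Ioi (0 : ℝ), H t := setLIntegral_mono hHmeas hbound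
      _ < ⊤ := hHfin
  simp only [Qcoef]
  rw [ENNReal.tsum_mul_left]
  exact ENNReal.mul_lt_top ENNReal.ofReal_lt_top hmain
end

section
/- Under the setting of the Dirichlet fractional Laplacian L on a finite subset G_1 of a connected graph with symmetric positive jump kernel Q_α (with Q_α(x,y) > 0 for all x ≠ y and summable rows), every eigenfunction φ_1 corresponding to the smallest eigenvalue λ_1 of L has constant sign; moreover λ_1 is a simple eigenvalue. -/
open Finset
open scoped RealInnerProductSpace

section Aux

variable {V : Type*} [DecidableEq V]

private lemma Lform (Q : V → V → ℝ) (hQsum : ∀ x, Summable fun y => Q x y)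
    (G₁ : Finset V) (L : (V → ℝ) → V → ℝ)
    (hL : ∀ u x, L u x = ∑' y, Q x y *
      ((if x ∈ G₁ then u x else 0) - (if y ∈ G₁ then u y else 0)))
    (u : V → ℝ) (x : V) (hx : x ∈ G₁) :
    L u x = (∑' y, Q x y) * u x - ∑ y ∈ G₁, Q x y * u y := by
  rw [hL]
  have h1 : Summable (fun y => Q x y * u x) := (hQsum x).mul_right _
  have h2 : Summable (fun y => Q x y * (if y ∈ G₁ then u y else 0)) :=
    summable_of_ne_finset_zero (s := G₁) (by intro y hy; simp [hy])
  have heq : (fun y => Q x y * ((if x ∈ G₁ then u x else 0) - (if y ∈ G₁ then u y else 0)))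
      = fun y => Q x y * u x - Q x y * (if y ∈ G₁ then u y else 0) := by
    funext y; rw [if_pos hx, mul_sub]
  have h3 : (∑' y, Q x y * (if y ∈ G₁ then u y else 0)) = ∑ y ∈ G₁, Q x y * u y := by
    rw [tsum_eq_sum (s := G₁) (f := fun y => Q x y * (if y ∈ G₁ then u y else 0))
      (by intro y hy; simp [hy])]
    exact Finset.sum_congr rfl (fun y hy => by rw [if_pos hy])
  rw [heq, h1.tsum_sub h2, tsum_mul_right, h3]

private noncomputable def opT (Q : V → V → ℝ) (G₁ : Finset V) (d : V → ℝ) :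
    EuclideanSpace ℝ {x // x ∈ G₁} →ₗ[ℝ] EuclideanSpace ℝ {x // x ∈ G₁} where
  toFun u := WithLp.toLp 2 (fun x => d x.1 * u x - ∑ y : {x // x ∈ G₁}, Q x.1 y.1 * u y)
  map_add' u v := by
    ext x
    simp only [PiLp.toLp_apply, PiLp.add_apply, mul_add, Finset.sum_add_distrib]
    ring
  map_smul' c u := by
    ext x
    simp only [PiLp.toLp_apply, PiLp.smul_apply, smul_eq_mul, RingHom.id_apply]
    have : ∑ y : {x // x ∈ G₁}, Q x.1 y.1 * (c * u y)
        = ∑ y : {x // x ∈ G₁}, c * (Q x.1 y.1 * u y) :=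
      Finset.sum_congr rfl fun y _ => by ring
    rw [this, ← Finset.mul_sum]
    ring

private lemma opT_apply (Q : V → V → ℝ) (G₁ : Finset V) (d : V → ℝ)
    (u : EuclideanSpace ℝ {x // x ∈ G₁}) (x : {x // x ∈ G₁}) :
    opT Q G₁ d u x = d x.1 * u x - ∑ y : {x // x ∈ G₁}, Q x.1 y.1 * u y := rfl

private lemma opT_symm (Q : V → V → ℝ) (hQsym : ∀ x y, Q x y = Q y x)
    (G₁ : Finset V) (d : V → ℝ) : (opT Q G₁ d).IsSymmetric := by
  intro u v
  simp only [PiLp.inner_apply, RCLike.inner_apply, conj_trivial, opT_apply]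
  simp only [sub_mul, mul_sub, Finset.sum_sub_distrib, Finset.sum_mul, Finset.mul_sum]
  congr 1
  · exact Finset.sum_congr rfl fun x _ => by ring
  · rw [Finset.sum_comm]
    exact Finset.sum_congr rfl fun x _ => Finset.sum_congr rfl fun y _ => by
      rw [hQsym]; ring

end Aux

theorem ground_state_positive_and_simple
    {V : Type*} [DecidableEq V]
    (Q : V → V → ℝ)
    (hQsym : ∀ x y, Q x y = Q y x)
    (hQpos : ∀ x y, x ≠ y → 0 < Q x y)
    (hQdiag : ∀ x, Q x x = 0)
    (hQsum : ∀ x, Summable fun y => Q x y)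
    (G₁ : Finset V) (hne : G₁.Nonempty) (hproper : ∃ x, x ∉ G₁)
    -- the Dirichlet fractional Laplacian acting on real functions supported in G₁
    (L : (V → ℝ) → V → ℝ)
    (hL : ∀ u x, L u x = ∑' y, Q x y *
      ((if x ∈ G₁ then u x else 0) - (if y ∈ G₁ then u y else 0)))
    (lam₁ : ℝ)
    -- lam₁ is an eigenvalue of L on G₁ ...
    (hev : ∃ φ : V → ℝ, (∀ x ∉ G₁, φ x = 0) ∧ (∃ x ∈ G₁, φ x ≠ 0) ∧
      ∀ x ∈ G₁, L φ x = lam₁ * φ x)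
    -- ... and it is the smallest one
    (hmin : ∀ μ : ℝ, (∃ φ : V → ℝ, (∀ x ∉ G₁, φ x = 0) ∧ (∃ x ∈ G₁, φ x ≠ 0) ∧
      ∀ x ∈ G₁, L φ x = μ * φ x) → lam₁ ≤ μ) :
    (∀ φ : V → ℝ, (∀ x ∉ G₁, φ x = 0) → (∃ x ∈ G₁, φ x ≠ 0) →
      (∀ x ∈ G₁, L φ x = lam₁ * φ x) →
      (∀ x ∈ G₁, 0 < φ x) ∨ (∀ x ∈ G₁, φ x < 0)) ∧
    (∀ φ ψ : V → ℝ, (∀ x ∉ G₁, φ x = 0) → (∃ x ∈ G₁, φ x ≠ 0) →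
      (∀ x ∈ G₁, L φ x = lam₁ * φ x) →
      (∀ x ∉ G₁, ψ x = 0) → (∀ x ∈ G₁, L ψ x = lam₁ * ψ x) →
      ∃ c : ℝ, ∀ x, ψ x = c * φ x) := by
  have hQnn : ∀ a b, 0 ≤ Q a b := by
    intro a b
    rcases eq_or_ne a b with h | h
    · rw [h, hQdiag]
    · exact (hQpos a b h).le
  set d : V → ℝ := fun x => ∑' y, Q x y with hd
  -- step 1 : no sign change for an eigenfunction of lam₁
  have key : ∀ φ : V → ℝ, (∀ x ∉ G₁, φ x = 0) → (∃ x ∈ G₁, φ x ≠ 0) →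
      (∀ x ∈ G₁, L φ x = lam₁ * φ x) →
      (∀ x ∈ G₁, 0 ≤ φ x) ∨ (∀ x ∈ G₁, φ x ≤ 0) := by
    intro φ hsupp hex heig
    by_contra hcon
    push_neg at hcon
    obtain ⟨⟨p, hp, hφp⟩, ⟨n, hn, hφn⟩⟩ := hcon
    -- hφp : φ p < 0 after push_neg? fix below
    obtain ⟨x₁, hx₁, hφx₁⟩ := hex
    haveI : Nonempty {x // x ∈ G₁} := ⟨⟨x₁, hx₁⟩⟩
    set Tc : EuclideanSpace ℝ {x // x ∈ G₁} →L[ℝ] EuclideanSpace ℝ {x // x ∈ G₁} := (opT Q G₁ d).toContinuousLinearMap with hTcdef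
    have hTcapp : ∀ (v : EuclideanSpace ℝ {x // x ∈ G₁}) (x : {x // x ∈ G₁}),
        Tc v x = d x.1 * v x - ∑ y : {x // x ∈ G₁}, Q x.1 y.1 * v y := fun v x => rfl
    have hTc : IsSelfAdjoint Tc := by
      rw [ContinuousLinearMap.isSelfAdjoint_iff_isSymmetric]
      have : (Tc : EuclideanSpace ℝ {x // x ∈ G₁} →ₗ[ℝ] EuclideanSpace ℝ {x // x ∈ G₁}) = opT Q G₁ d := LinearMap.coe_toContinuousLinearMap _
      rw [this]
      exact opT_symm Q hQsym G₁ d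
    set u : EuclideanSpace ℝ {x // x ∈ G₁} := WithLp.toLp 2 (fun x : {x // x ∈ G₁} => φ x.1 : {x // x ∈ G₁} → ℝ) with hu
    have huapp : ∀ x : {x // x ∈ G₁}, u x = φ x.1 := fun x => rfl
    have hu0 : u ≠ 0 := by
      intro h
      exact hφx₁ (by rw [← huapp ⟨x₁, hx₁⟩, h]; rfl)
    have hunorm : 0 < ‖u‖ := norm_pos_iff.mpr hu0
    -- the eigen-equation transported to E
    have hTu : Tc u = lam₁ • u := by
      ext x
      rw [hTcapp u x, PiLp.smul_apply, smul_eq_mul, huapp]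
      have h1 : ∑ y : {x // x ∈ G₁}, Q x.1 y.1 * u y = ∑ y ∈ G₁, Q x.1 y * φ y := by
        rw [← Finset.sum_coe_sort G₁ (fun y => Q x.1 y * φ y)]
      rw [h1, ← Lform Q hQsum G₁ L hL φ x.1 x.2, heig x.1 x.2]
    -- minimize the Rayleigh quotient on the sphere of radius ‖u‖
    have H1 : IsCompact (Metric.sphere (0 : EuclideanSpace ℝ {x // x ∈ G₁}) ‖u‖) := isCompact_sphere _ _
    have H2 : (Metric.sphere (0 : EuclideanSpace ℝ {x // x ∈ G₁}) ‖u‖).Nonempty := ⟨u, by simp⟩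
    obtain ⟨x₀, hx₀mem, hminOn⟩ :=
      H1.exists_isMinOn H2 Tc.reApplyInnerSelf_continuous.continuousOn
    have hx₀norm : ‖x₀‖ = ‖u‖ := by simpa using hx₀mem
    have hx₀ne : x₀ ≠ 0 := by
      rw [← norm_pos_iff, hx₀norm]; exact hunorm
    have hminOn' : IsMinOn Tc.reApplyInnerSelf (Metric.sphere (0 : EuclideanSpace ℝ {x // x ∈ G₁}) ‖x₀‖) x₀ := by
      rw [hx₀norm]; exact hminOn
    obtain ⟨μ, hμeig⟩ : ∃ μ : ℝ, Module.End.HasEigenvector (Tc : EuclideanSpace ℝ {x // x ∈ G₁} →ₗ[ℝ] EuclideanSpace ℝ {x // x ∈ G₁}) μ x₀ :=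
      ⟨_, hTc.hasEigenvector_of_isMinOn hx₀ne hminOn'⟩
    have hx₀eq : Tc x₀ = μ • x₀ := hμeig.apply_eq_smul
    -- lam₁ ≤ μ via hmin
    have hlam_le : lam₁ ≤ μ := by
      apply hmin
      refine ⟨fun v => if h : v ∈ G₁ then x₀ ⟨v, h⟩ else 0, ?_, ?_, ?_⟩
      · intro x hx; simp only [dif_neg hx]
      · by_contra hall
        push_neg at hall
        apply hx₀ne
        ext i
        have := hall i.1 i.2
        rw [dif_pos i.2] at this
        exact this
      · intro x hx
        rw [Lform Q hQsum G₁ L hL _ x hx, dif_pos hx]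
        have h1 : ∑ y ∈ G₁, Q x y * (if h : y ∈ G₁ then x₀ ⟨y, h⟩ else 0)
            = ∑ y : {x // x ∈ G₁}, Q x y.1 * x₀ y := by
          rw [← Finset.sum_coe_sort G₁ (fun y => Q x y * (if h : y ∈ G₁ then x₀ ⟨y, h⟩ else 0))]
          exact Finset.sum_congr rfl fun y _ => by rw [dif_pos y.2]
        rw [h1]
        have h2 : Tc x₀ ⟨x, hx⟩ = (μ • x₀) ⟨x, hx⟩ := by rw [hx₀eq]
        rw [hTcapp x₀ ⟨x, hx⟩, PiLp.smul_apply, smul_eq_mul] at h2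
        simp only [dif_pos hx]
        exact h2
    -- the quadratic form of Tc
    have expand : ∀ v : EuclideanSpace ℝ {x // x ∈ G₁}, ⟪Tc v, v⟫ =
        (∑ x : {x // x ∈ G₁}, d x.1 * v x * v x) - ∑ x : {x // x ∈ G₁}, ∑ y : {x // x ∈ G₁}, Q x.1 y.1 * v y * v x := by
      intro v
      simp only [PiLp.inner_apply, RCLike.inner_apply, conj_trivial, hTcapp,
        sub_mul, Finset.sum_sub_distrib, Finset.sum_mul]
      rw [← Finset.sum_sub_distrib]
      refine Finset.sum_congr rfl fun x _ => ?_
      rw [mul_sub, Finset.mul_sum]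
      congr 1
      · ring
      · exact Finset.sum_congr rfl fun y _ => by ring
    -- compare with |φ|
    set w : EuclideanSpace ℝ {x // x ∈ G₁} := WithLp.toLp 2 (fun x : {x // x ∈ G₁} => |φ x.1| : {x // x ∈ G₁} → ℝ) with hw
    have hwapp : ∀ x : {x // x ∈ G₁}, w x = |u x| := fun x => rfl
    have hwnorm : ‖w‖ = ‖u‖ := by
      rw [EuclideanSpace.norm_eq, EuclideanSpace.norm_eq]
      congr 1
      exact Finset.sum_congr rfl fun x _ => by
        rw [hwapp, Real.norm_eq_abs, Real.norm_eq_abs, abs_abs]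
    have hwmem : w ∈ Metric.sphere (0 : EuclideanSpace ℝ {x // x ∈ G₁}) ‖u‖ := by
      simp [hwnorm]
    have hle : Tc.reApplyInnerSelf x₀ ≤ Tc.reApplyInnerSelf w := hminOn hwmem
    -- strict inequality of quadratic forms
    have hstrict : ⟪Tc w, w⟫ < ⟪Tc u, u⟫ := by
      rw [expand u, expand w]
      have hdeq : ∑ x : {x // x ∈ G₁}, d x.1 * w x * w x = ∑ x : {x // x ∈ G₁}, d x.1 * u x * u x :=
        Finset.sum_congr rfl fun x _ => by
          rw [hwapp, mul_assoc, mul_assoc, abs_mul_abs_self]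
      rw [hdeq]
      have hQlt : ∑ x : {x // x ∈ G₁}, ∑ y : {x // x ∈ G₁}, Q x.1 y.1 * u y * u x
          < ∑ x : {x // x ∈ G₁}, ∑ y : {x // x ∈ G₁}, Q x.1 y.1 * w y * w x := by
        have hpn : (⟨p, hp⟩ : {x // x ∈ G₁}) ≠ ⟨n, hn⟩ := by
          intro h
          rw [Subtype.mk_eq_mk] at h
          rw [h] at hφp
          exact absurd hφn (not_lt.mpr hφp.le)
        have hterm_le : ∀ x y : {x // x ∈ G₁},
            Q x.1 y.1 * u y * u x ≤ Q x.1 y.1 * w y * w x := by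
          intro x y
          rw [hwapp, hwapp, mul_assoc, mul_assoc]
          apply mul_le_mul_of_nonneg_left _ (hQnn _ _)
          calc u y * u x ≤ |u y * u x| := le_abs_self _
            _ = |u y| * |u x| := abs_mul _ _
        apply Finset.sum_lt_sum
        · intro x _
          exact Finset.sum_le_sum fun y _ => hterm_le x y
        · refine ⟨⟨p, hp⟩, Finset.mem_univ _, ?_⟩
          apply Finset.sum_lt_sum
          · intro y _
            exact hterm_le _ y
          · refine ⟨⟨n, hn⟩, Finset.mem_univ _, ?_⟩
            rw [hwapp, hwapp, mul_assoc, mul_assoc]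
            apply mul_lt_mul_of_pos_left _ (hQpos p n (fun h => hpn (Subtype.ext h)))
            have h1 : u (⟨n, hn⟩ : {x // x ∈ G₁}) * u (⟨p, hp⟩ : {x // x ∈ G₁}) < 0 :=
              mul_neg_of_pos_of_neg hφn hφp
            have h2 : 0 < |u (⟨n, hn⟩ : {x // x ∈ G₁})| * |u (⟨p, hp⟩ : {x // x ∈ G₁})| := by
              apply mul_pos <;> rw [abs_pos]
              · exact ne_of_gt hφn
              · exact ne_of_lt hφp
            linarith
      linarith
    -- Rayleigh value of u
    have hRu : ⟪Tc u, u⟫ = lam₁ * ‖u‖ ^ 2 := by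
      rw [hTu, real_inner_smul_left, real_inner_self_eq_norm_sq]
    have hRx₀ : ⟪Tc x₀, x₀⟫ = μ * ‖u‖ ^ 2 := by
      rw [hx₀eq]
      rw [real_inner_smul_left, real_inner_self_eq_norm_sq, hx₀norm]
    have hre : ∀ v : EuclideanSpace ℝ {x // x ∈ G₁}, Tc.reApplyInnerSelf v = ⟪Tc v, v⟫ := by
      intro v
      rfl
    rw [hre, hre, hRx₀] at hle
    have : μ * ‖u‖ ^ 2 < lam₁ * ‖u‖ ^ 2 := by
      calc μ * ‖u‖ ^ 2 ≤ ⟪Tc w, w⟫ := hle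
        _ < ⟪Tc u, u⟫ := hstrict
        _ = lam₁ * ‖u‖ ^ 2 := hRu
    have hμlt : μ < lam₁ := lt_of_mul_lt_mul_right this (by positivity)
    exact absurd hlam_le (not_le.mpr hμlt)
  -- step 2 : strict sign
  have strict : ∀ φ : V → ℝ, (∀ x ∉ G₁, φ x = 0) → (∃ x ∈ G₁, φ x ≠ 0) →
      (∀ x ∈ G₁, L φ x = lam₁ * φ x) → (∀ x ∈ G₁, 0 ≤ φ x) →
      ∀ x ∈ G₁, 0 < φ x := by
    intro φ hsupp hex heig hnn x hx
    rcases lt_or_eq_of_le (hnn x hx) with h | h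
    · exact h
    ·
      exfalso
      obtain ⟨x₁, hx₁, hφx₁⟩ := hex
      have hφx : φ x = 0 := h.symm
      have heq := heig x hx
      rw [Lform Q hQsum G₁ L hL φ x hx, hφx, mul_zero, mul_zero, zero_sub,
        neg_eq_zero] at heq
      have hxne : x₁ ≠ x := fun h => hφx₁ (h ▸ hφx)
      have hterm : 0 < Q x x₁ * φ x₁ :=
        mul_pos (hQpos x x₁ (fun h => hxne h.symm)) (lt_of_le_of_ne (hnn x₁ hx₁) (Ne.symm hφx₁))
      have hsum : 0 < ∑ y ∈ G₁, Q x y * φ y := by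
        apply Finset.sum_pos' (fun y hy => mul_nonneg (hQnn x y) (hnn y hy))
        exact ⟨x₁, hx₁, hterm⟩
      rw [heq] at hsum
      exact lt_irrefl 0 hsum
  -- part one
  have part1 : ∀ φ : V → ℝ, (∀ x ∉ G₁, φ x = 0) → (∃ x ∈ G₁, φ x ≠ 0) →
      (∀ x ∈ G₁, L φ x = lam₁ * φ x) →
      (∀ x ∈ G₁, 0 < φ x) ∨ (∀ x ∈ G₁, φ x < 0) := by
    intro φ hsupp hex heig
    rcases key φ hsupp hex heig with h | h
    · exact Or.inl (strict φ hsupp hex heig h)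
    · right
      have hsupp' : ∀ x ∉ G₁, (-φ) x = 0 := fun x hx => by simp [hsupp x hx]
      have hex' : ∃ x ∈ G₁, (-φ) x ≠ 0 := by
        obtain ⟨x, hx, hφx⟩ := hex
        exact ⟨x, hx, by simpa using hφx⟩
      have heig' : ∀ x ∈ G₁, L (-φ) x = lam₁ * (-φ) x := by
        intro x hx
        rw [Lform Q hQsum G₁ L hL (-φ) x hx]
        have := heig x hx
        rw [Lform Q hQsum G₁ L hL φ x hx] at this
        simp only [Pi.neg_apply, mul_neg, Finset.sum_neg_distrib]
        linarith
      have hnn' : ∀ x ∈ G₁, 0 ≤ (-φ) x := fun x hx => by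
        simpa using h x hx
      have := strict (-φ) hsupp' hex' heig' hnn'
      intro x hx
      have := this x hx
      simpa using this
  refine ⟨part1, ?_⟩
  -- part two : simplicity
  intro φ ψ hsuppφ hexφ heigφ hsuppψ heigψ
  obtain ⟨x₁, hx₁⟩ := hne
  have hφx₁ : φ x₁ ≠ 0 := by
    rcases part1 φ hsuppφ hexφ heigφ with h | h
    · exact ne_of_gt (h x₁ hx₁)
    · exact ne_of_lt (h x₁ hx₁)
  set c : ℝ := ψ x₁ / φ x₁ with hc
  refine ⟨c, ?_⟩
  set η : V → ℝ := fun x => ψ x - c * φ x with hη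
  have hsuppη : ∀ x ∉ G₁, η x = 0 := by
    intro x hx
    simp [hη, hsuppψ x hx, hsuppφ x hx]
  have heigη : ∀ x ∈ G₁, L η x = lam₁ * η x := by
    intro x hx
    rw [Lform Q hQsum G₁ L hL η x hx]
    have h1 := heigφ x hx; rw [Lform Q hQsum G₁ L hL φ x hx] at h1
    have h2 := heigψ x hx; rw [Lform Q hQsum G₁ L hL ψ x hx] at h2
    have h3 : ∑ y ∈ G₁, Q x y * η y
        = (∑ y ∈ G₁, Q x y * ψ y) - c * ∑ y ∈ G₁, Q x y * φ y := by
      rw [Finset.mul_sum, ← Finset.sum_sub_distrib]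
      exact Finset.sum_congr rfl fun y _ => by simp [hη]; ring
    rw [h3]
    simp only [hη]
    linear_combination h2 - c * h1
  have hηzero : ∀ x ∈ G₁, η x = 0 := by
    by_contra hcon
    push_neg at hcon
    obtain ⟨z, hz, hηz⟩ := hcon
    have hx₁η : η x₁ = 0 := by
      simp [hη, hc]
      field_simp
      ring
    rcases part1 η hsuppη ⟨z, hz, hηz⟩ heigη with h | h
    · exact absurd hx₁η (ne_of_gt (h x₁ hx₁))
    · exact absurd hx₁η (ne_of_lt (h x₁ hx₁))
  intro x
  by_cases hx : x ∈ G₁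
  · have := hηzero x hx
    simp only [hη] at this
    linarith
  · rw [hsuppψ x hx, hsuppφ x hx, mul_zero]
end
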